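/- arXiv:0802.4369 — 5 statements merged into one kernel-verified Lean document; each statement's English description precedes it below -/
import Mathlib

section
/- Let C be a closed T_f-invariant subset of X × G/H (i.e. T_f(C) = C) whose projection to X is a non-meager subset of X. Then there exists a compact set K ⊆ G/H such that (X × K) ∩ C projects onto the whole space X. -/
open Topology Pointwise Set Filter

section Defs

variable {X : Type*} [TopologicalSpace X] {G : Type*} [TopologicalSpace G] [Group G]

/-- The positive-iterate part of the cocycle generated by `f` over `T`:
`f(n,x) = f(T^{n-1}x) ⋯ f(Tx) · f(x)` for `n ≥ 1` and `f(0,x) = e`. -/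
def cocycleNat (T : X ≃ₜ X) (f : X → G) : ℕ → X → G
  | 0, _ => 1
  | n + 1, x => f ((T.toEquiv ^ n) x) * cocycleNat T f n x

/-- The cocycle generated by `f` over `T`, at integer times:
`f(n,x)` as above for `n ≥ 0` and `f(n,x) = f(-n, T^n x)⁻¹` for `n < 0`. -/
def cocycle (T : X ≃ₜ X) (f : X → G) (n : ℤ) (x : X) : G :=
  if 0 ≤ n then cocycleNat T f n.toNat x
  else (cocycleNat T f (-n).toNat ((T.toEquiv ^ n) x))⁻¹

/-- The `n`-th power of the skew product `T_f` on `X × G`: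
`T_f^n (x,g) = (T^n x, f(n,x)·g)`. -/
def skewPow (T : X ≃ₜ X) (f : X → G) (n : ℤ) (p : X × G) : X × G :=
  ((T.toEquiv ^ n) p.1, cocycle T f n p.1 * p.2)

/-- The `n`-th power of the skew product `T_f` acting on `X × G/H`:
`T_f^n (x, gH) = (T^n x, f(n,x)·gH)`. -/
def skewPowQ (T : X ≃ₜ X) (f : X → G) (H : Subgroup G) (n : ℤ) (p : X × (G ⧸ H)) :
    X × (G ⧸ H) :=
  ((T.toEquiv ^ n) p.1, cocycle T f n p.1 • p.2)

/-- The local essential range `E_x(f)`: all `g ∈ G` such that for every open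
neighbourhood `U` of `x` and every open neighbourhood `V` of the identity there are
`n ∈ ℤ` and `y ∈ U ∩ T⁻ⁿU` with `f(n,y) ∈ V·g`. -/
def essRange (T : X ≃ₜ X) (f : X → G) (x : X) : Set G :=
  {g | ∀ U : Set X, IsOpen U → x ∈ U → ∀ V : Set G, IsOpen V → (1 : G) ∈ V →
    ∃ n : ℤ, ∃ y ∈ U, (T.toEquiv ^ n) y ∈ U ∧ ∃ v ∈ V, cocycle T f n y = v * g}

/-- `P_x(f)`: the vertical section at `x` of the closure of the `T_f`-orbit of `(x,e)`. -/
def Pset (T : X ≃ₜ X) (f : X → G) (x : X) : Set G :=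
  {g | (x, g) ∈ closure (Set.range fun n : ℤ => skewPow T f n (x, 1))}

/-- `𝒟(f) = {x : E_x(f) = P_x(f)}`. -/
def Dset (T : X ≃ₜ X) (f : X → G) : Set X :=
  {x | essRange T f x = Pset T f x}

/-- Topological recurrence of the cocycle generated by `f`: for every open
neighbourhood `V` of the identity of `G` and every nonempty open `U ⊆ X` there is
`n ≠ 0` with `T⁻ⁿU ∩ U ∩ {x : f(n,x) ∈ V} ≠ ∅`. -/
def IsRecurrentCocycle (T : X ≃ₜ X) (f : X → G) : Prop :=
  ∀ V : Set G, IsOpen V → (1 : G) ∈ V → ∀ U : Set X, IsOpen U → U.Nonempty →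
    ∃ n : ℤ, n ≠ 0 ∧ ∃ x ∈ U, (T.toEquiv ^ n) x ∈ U ∧ cocycle T f n x ∈ V

/-- Minimality of a homeomorphism: every orbit is dense. -/
def IsMinimal (T : X ≃ₜ X) : Prop :=
  ∀ x : X, Dense (Set.range fun n : ℤ => (T.toEquiv ^ n) x)

/-- A consistent selection of subgroups for the cocycle generated by `f`: a family of
closed subgroups `H x ⊆ E_x(f)` with `H (Tⁿx) = f(n,x)·(H x)·f(n,x)⁻¹` depending
continuously on `x` for the Fell topology. -/
structure IsConsistentSelection (T : X ≃ₜ X) (f : X → G) (H : X → Subgroup G) : Prop where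
  isClosed : ∀ x : X, IsClosed (H x : Set G)
  subset_essRange : ∀ x : X, (H x : Set G) ⊆ essRange T f x
  conj : ∀ (x : X) (n : ℤ), (H ((T.toEquiv ^ n) x) : Set G) =
    (fun h => cocycle T f n x * h * (cocycle T f n x)⁻¹) '' (H x : Set G)
  fell_compact : ∀ (x : X) (K : Set G), IsCompact K → K ∩ (H x : Set G) = ∅ →
    ∃ W ∈ 𝓝 x, ∀ y ∈ W, K ∩ (H y : Set G) = ∅
  fell_open : ∀ (x : X) (O : Set G), IsOpen O → (O ∩ (H x : Set G)).Nonempty →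
    ∃ W ∈ 𝓝 x, ∀ y ∈ W, (O ∩ (H y : Set G)).Nonempty

/-- The `T_f`-orbit closure of a point of `X × G`. -/
def orbitClosure (T : X ≃ₜ X) (f : X → G) (p : X × G) : Set (X × G) :=
  closure (Set.range fun n : ℤ => skewPow T f n p)

/-- For `C ⊆ X × G`, the set `H = {g : C·g⁻¹ = C}`, where `C·g = {(y, c·g) : (y,c) ∈ C}`. -/
def stabSet (C : Set (X × G)) : Set G :=
  {g : G | (fun p : X × G => (p.1, p.2 * g⁻¹)) '' C = C}

/-- A strongly regular orbit closure: a `T_f`-orbit closure which projects onto all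
of `X` and all of whose vertical sections are single left cosets of
`H = {g : C·g⁻¹ = C}`. -/
def IsStronglyRegularOC (T : X ≃ₜ X) (f : X → G) (C : Set (X × G)) : Prop :=
  (∃ p : X × G, C = orbitClosure T f p) ∧ Prod.fst '' C = Set.univ ∧
    ∀ x : X, ∃ gx : G, {g : G | (x, g) ∈ C} = {gx} * stabSet C

/-- A strongly regular cocycle: one whose skew product admits a strongly regular
orbit closure. -/
def IsStronglyRegularCocycle (T : X ≃ₜ X) (f : X → G) : Prop :=
  ∃ C : Set (X × G), IsStronglyRegularOC T f C

/-- A regular cocycle: some `T_f`-orbit closure projects onto all of `X`. -/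
def IsRegularCocycle (T : X ≃ₜ X) (f : X → G) : Prop :=
  ∃ p : X × G, Prod.fst '' orbitClosure T f p = Set.univ

end Defs

theorem statement_0
    {X : Type*} [TopologicalSpace X] [CompactSpace X] [TopologicalSpace.MetrizableSpace X]
    {G : Type*} [TopologicalSpace G] [Group G] [IsTopologicalGroup G]
    [LocallyCompactSpace G] [SecondCountableTopology G] [T2Space G]
    (T : X ≃ₜ X) (hT : IsMinimal T) (f : X → G) (hf : Continuous f)
    (H : Subgroup G) (hHcl : IsClosed (H : Set G))
    (C : Set (X × (G ⧸ H))) (hCcl : IsClosed C)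
    (hCinv : (fun p : X × (G ⧸ H) => (T p.1, f p.1 • p.2)) '' C = C)
    (hCproj : ¬ IsMeagre (Prod.fst '' C)) :
    ∃ K : Set (G ⧸ H), IsCompact K ∧
      Prod.fst '' (C ∩ (Set.univ ×ˢ K)) = Set.univ := by
  have hT' : ∀ x : X, Dense (Set.range fun n : ℤ => (T.toEquiv ^ n) x) := hT
  classical
  -- exhaustion of G ⧸ H by compact sets
  set Kq : ℕ → Set (G ⧸ H) := fun n => (QuotientGroup.mk : G → G ⧸ H) '' compactCovering G n with hKq
  have hKqc : ∀ n, IsCompact (Kq n) :=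
    fun n => (isCompact_compactCovering G n).image continuous_quotient_mk'
  have hKqU : (⋃ n, Kq n) = univ := by
    rw [hKq, ← image_iUnion, iUnion_compactCovering, image_univ,
      (QuotientGroup.mk_surjective).range_eq]
  -- the closed pieces of the projection
  set F : ℕ → Set X := fun n => Prod.fst '' (C ∩ univ ×ˢ Kq n) with hF
  have hCKcomp : ∀ n, IsCompact (C ∩ univ ×ˢ Kq n) :=
    fun n => (isCompact_univ.prod (hKqc n)).inter_left hCcl
  have hFcomp : ∀ n, IsCompact (F n) := fun n => (hCKcomp n).image continuous_fst
  have hFU : Prod.fst '' C = ⋃ n, F n := by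
    apply subset_antisymm
    · rintro x ⟨p, hp, rfl⟩
      have : p.2 ∈ ⋃ n, Kq n := hKqU ▸ mem_univ _
      obtain ⟨n, hn⟩ := mem_iUnion.mp this
      exact mem_iUnion.mpr ⟨n, ⟨p, ⟨hp, mem_univ _, hn⟩, rfl⟩⟩
    · exact iUnion_subset fun n => image_mono inter_subset_left
  -- some piece has nonempty interior
  have hexists : ∃ n, (interior (F n)).Nonempty := by
    by_contra h
    push_neg at h
    apply hCproj
    rw [hFU]
    refine isMeagre_iUnion fun n => ?_
    have hcl : IsClosed (F n) := (hFcomp n).isClosed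
    have hnd : IsOpen (F n)ᶜ ∧ Dense (F n)ᶜ := isClosed_isNowhereDense_iff_compl.mp
      ⟨hcl, hcl.isNowhereDense_iff.mpr (h n)⟩
    exact residual_of_dense_open hnd.1 hnd.2
  obtain ⟨n0, hn0⟩ := hexists
  set U := interior (F n0) with hU
  have hUopen : IsOpen U := isOpen_interior
  -- the skew product homeomorphism
  let Φ : (X × (G ⧸ H)) ≃ₜ (X × (G ⧸ H)) :=
    { toFun := fun p => (T p.1, f p.1 • p.2)
      invFun := fun p => (T.symm p.1, (f (T.symm p.1))⁻¹ • p.2)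
      left_inv := fun p => by simp
      right_inv := fun p => by simp
      continuous_toFun := ((T.continuous.comp continuous_fst).prodMk
        ((hf.comp continuous_fst).smul continuous_snd))
      continuous_invFun := ((T.symm.continuous.comp continuous_fst).prodMk
        (((hf.comp (T.symm.continuous.comp continuous_fst)).inv).smul continuous_snd)) }
  set E : Equiv.Perm (X × (G ⧸ H)) := Φ.toEquiv with hE
  have hEC : E '' C = C := hCinv
  have hECinv : ⇑E⁻¹ '' C = C := by
    have := congrArg (fun s => ⇑E⁻¹ '' s) hEC
    simpa [← image_comp, Function.comp] using this.symm
  have key : ∀ m : ℤ, (⇑(E ^ m) '' C = C) ∧ (∀ p : X × (G ⧸ H), ((E ^ m) p).1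
      = (T.toEquiv ^ m) p.1) ∧ Continuous (⇑(E ^ m)) := by
    intro m
    induction m using Int.induction_on with
    | zero => simp [continuous_id]
    | succ k ih =>
      have h1 : ⇑(E ^ ((k : ℤ) + 1)) = (⇑(E ^ (k : ℤ))) ∘ ⇑E := by
        rw [zpow_add_one]; rfl
      refine ⟨?_, ?_, ?_⟩
      · rw [h1, image_comp, hEC, ih.1]
      · intro p
        have h2 : (T.toEquiv ^ ((k : ℤ) + 1)) p.1 = (T.toEquiv ^ (k : ℤ)) (T p.1) := by
          rw [zpow_add_one]; rfl
        rw [h1, h2]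
        exact ih.2.1 (E p)
      · rw [h1]; exact ih.2.2.comp Φ.continuous
    | pred k ih =>
      have h1 : ⇑(E ^ ((-k : ℤ) - 1)) = (⇑(E ^ (-k : ℤ))) ∘ ⇑E⁻¹ := by
        rw [zpow_sub_one]; rfl
      refine ⟨?_, ?_, ?_⟩
      · rw [h1, image_comp, hECinv, ih.1]
      · intro p
        have h2 : (T.toEquiv ^ ((-k : ℤ) - 1)) p.1 = (T.toEquiv ^ (-k : ℤ)) (T.symm p.1) := by
          rw [zpow_sub_one]; rfl
        rw [h1, h2]
        exact ih.2.1 (E⁻¹ p)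
      · rw [h1]
        exact ih.2.2.comp Φ.symm.continuous
  -- continuity of iterates of T
  have hTc : ∀ m : ℤ, Continuous fun x : X => (T.toEquiv ^ m) x := by
    intro m
    have : Continuous fun x : X => ((E ^ m) (x, ((1 : G) : G ⧸ H))).1 :=
      continuous_fst.comp ((key m).2.2.comp (continuous_id.prodMk continuous_const))
    simpa [(key m).2.1] using this
  -- open cover by preimages of U
  have hUne : U.Nonempty := hn0
  have hcover : (univ : Set X) ⊆ ⋃ m : ℤ, (fun x => (T.toEquiv ^ m) x) ⁻¹' U := by
    intro x _
    obtain ⟨y, ⟨m, rfl⟩, hy⟩ := (hT' x).exists_mem_open hUopen hUne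
    exact mem_iUnion.mpr ⟨m, hy⟩
  obtain ⟨s, hs⟩ := isCompact_univ.elim_finite_subcover _
    (fun m : ℤ => hUopen.preimage (hTc m)) hcover
  -- the compact set K
  refine ⟨⋃ m ∈ s, Prod.snd '' (⇑(E ^ (-m)) '' (C ∩ univ ×ˢ Kq n0)), ?_, ?_⟩
  · exact s.finite_toSet.isCompact_biUnion fun m _ =>
      (((hCKcomp n0).image (key (-m)).2.2).image continuous_snd)
  · apply eq_univ_iff_forall.mpr
    intro x
    obtain ⟨m, hm, hxm⟩ := mem_iUnion₂.mp (hs (mem_univ x))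
    have hxU : (T.toEquiv ^ m) x ∈ F n0 := interior_subset hxm
    obtain ⟨p, hp, hp1⟩ := hxU
    refine ⟨(E ^ (-m)) p, ⟨?_, mem_univ _, ?_⟩, ?_⟩
    · rw [← (key (-m)).1]
      exact mem_image_of_mem _ hp.1
    · exact mem_biUnion hm (mem_image_of_mem _ (mem_image_of_mem _ hp))
    · rw [(key (-m)).2.1 p, hp1, zpow_neg]
      exact Equiv.symm_apply_apply _ _
end

section
/- Let {H_x}_{x∈X} be a consistent selection of subgroups for the cocycle f, and let U be any relatively compact open subset of G. Then the set M_U = {x ∈ X : E_x(f) ∩ (cl(U)·H_x \ U·H_x) = ∅} is open in X, where cl(U) denotes the closure of U in G. -/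
open Topology Pointwise Set Filter

section Aux

set_option linter.unusedSectionVars false

variable {X : Type*} [TopologicalSpace X] {G : Type*} [TopologicalSpace G] [Group G]

theorem contPermPow (σ : Equiv.Perm X) (hσ : Continuous ⇑σ) (m : ℕ) :
    Continuous fun x => (σ ^ m) x := by
  induction m with
  | zero => simpa using continuous_id'
  | succ m ih =>
      have : ∀ x, (σ ^ (m+1)) x = (σ ^ m) (σ x) := by
        intro x; rw [pow_succ, Equiv.Perm.mul_apply]
      simpa only [this, Function.comp_def] using ih.comp hσ

theorem contTz (T : X ≃ₜ X) (n : ℤ) : Continuous fun x => (T.toEquiv ^ n) x := by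
  rcases n with m | m
  · rw [Int.ofNat_eq_coe, zpow_natCast]
    exact contPermPow _ T.continuous m
  · have : ∀ x, (T.toEquiv ^ Int.negSucc m) x = ((T.toEquiv⁻¹) ^ (m+1)) x := by
      intro x; rw [zpow_negSucc, inv_pow]
    simp only [this]
    exact contPermPow _ T.symm.continuous (m+1)

theorem Tz_add (T : X ≃ₜ X) (m n : ℤ) (x : X) :
    (T.toEquiv ^ m) ((T.toEquiv ^ n) x) = (T.toEquiv ^ (m + n)) x := by
  rw [zpow_add, Equiv.Perm.mul_apply]

theorem cocycleNat_succ' (T : X ≃ₜ X) (f : X → G) (a : ℕ) (x : X) :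
    cocycleNat T f (a + 1) x = cocycleNat T f a (T.toEquiv x) * f x := by
  induction a with
  | zero => simp [cocycleNat]
  | succ a ih =>
      have h1 : cocycleNat T f (a + 1 + 1) x = f ((T.toEquiv ^ (a+1)) x) * cocycleNat T f (a+1) x := rfl
      have h2 : cocycleNat T f (a + 1) (T.toEquiv x) =
          f ((T.toEquiv ^ a) (T.toEquiv x)) * cocycleNat T f a (T.toEquiv x) := rfl
      have h3 : (T.toEquiv ^ a) (T.toEquiv x) = (T.toEquiv ^ (a+1)) x := by
        rw [pow_succ, Equiv.Perm.mul_apply]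
      rw [h1, ih, h2, h3, mul_assoc]

theorem cocycle_zero (T : X ≃ₜ X) (f : X → G) (x : X) : cocycle T f 0 x = 1 := by
  simp [cocycle, cocycleNat]

theorem cocycle_succ (T : X ≃ₜ X) (f : X → G) (n : ℤ) (x : X) :
    cocycle T f (n + 1) x = f ((T.toEquiv ^ n) x) * cocycle T f n x := by
  rcases le_or_gt 0 n with hn | hn
  · obtain ⟨m, rfl⟩ := Int.eq_ofNat_of_zero_le hn
    have h1 : (0:ℤ) ≤ (m:ℤ) + 1 := by omega
    rw [cocycle, cocycle, if_pos h1, if_pos hn]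
    have h2 : ((m:ℤ) + 1).toNat = m + 1 := by omega
    have h3 : ((m:ℤ)).toNat = m := by omega
    rw [h2, h3]
    have h4 : (T.toEquiv ^ (m:ℤ)) x = (T.toEquiv ^ m) x := by rw [zpow_natCast]
    rw [h4]; rfl
  · rcases eq_or_lt_of_le (show n ≤ -1 by omega) with hn1 | hn1
    · subst hn1
      have h0 : (-1 : ℤ) + 1 = 0 := by norm_num
      rw [h0, cocycle_zero]
      have hA : ¬ (0 ≤ (-1:ℤ)) := by omega
      rw [cocycle, if_neg hA]
      have h2 : ((1:ℤ)).toNat = 1 := rfl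
      have : (-(-1) : ℤ) = 1 := by norm_num
      rw [this, h2]
      have h3 : cocycleNat T f 1 ((T.toEquiv ^ (-1:ℤ)) x) = f ((T.toEquiv ^ (-1:ℤ)) x) := by
        simp [cocycleNat]
      rw [h3, mul_inv_cancel]
    · have hA : ¬ (0 ≤ n) := by omega
      have hB : ¬ (0 ≤ n + 1) := by omega
      rw [cocycle, cocycle, if_neg hB, if_neg hA]
      have hmn : (-n).toNat = (-(n+1)).toNat + 1 := by omega
      rw [hmn]
      have key : cocycleNat T f ((-(n+1)).toNat + 1) ((T.toEquiv ^ n) x)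
          = cocycleNat T f (-(n+1)).toNat ((T.toEquiv ^ (n+1)) x) * f ((T.toEquiv ^ n) x) := by
        rw [cocycleNat_succ']
        have h5 : T.toEquiv ((T.toEquiv ^ n) x) = (T.toEquiv ^ (n+1)) x := by
          have := Tz_add T 1 n x
          rw [zpow_one] at this
          rw [this, add_comm]
        rw [h5]
      rw [key, mul_inv_rev, ← mul_assoc, mul_inv_cancel, one_mul]

theorem cocycle_add (T : X ≃ₜ X) (f : X → G) (m n : ℤ) (x : X) :
    cocycle T f (m + n) x = cocycle T f m ((T.toEquiv ^ n) x) * cocycle T f n x := by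
  induction m using Int.induction_on with
  | zero => rw [zero_add, cocycle_zero, one_mul]
  | succ m ih =>
      have h1 : (m : ℤ) + 1 + n = ((m : ℤ) + n) + 1 := by ring
      rw [h1, cocycle_succ, ih, cocycle_succ, Tz_add, mul_assoc]
  | pred m ih =>
      have h1 : (-(m:ℤ) - 1 + n) + 1 = -(m:ℤ) + n := by ring
      have h2 : (-(m:ℤ) - 1) + 1 = -(m:ℤ) := by ring
      have e1 := cocycle_succ T f (-(m:ℤ) - 1 + n) x
      rw [h1, ih] at e1
      have e2 := cocycle_succ T f (-(m:ℤ) - 1) ((T.toEquiv ^ n) x)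
      rw [h2] at e2
      rw [e2, Tz_add] at e1
      -- e1 : f ((T^(-m-1+n)) x) * cocycle (-m-1+n) x
      --      = f ((T^(-m-1+n)) x) * cocycle (-m-1) (T^n x) * cocycle n x
      rw [mul_assoc] at e1
      exact mul_left_cancel e1.symm

theorem cocycle_neg (T : X ≃ₜ X) (f : X → G) (n : ℤ) (x : X) :
    cocycle T f (-n) ((T.toEquiv ^ n) x) = (cocycle T f n x)⁻¹ := by
  have := cocycle_add T f (-n) n x
  rw [neg_add_cancel, cocycle_zero] at this
  exact eq_inv_of_mul_eq_one_left this.symm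

theorem cocycleNat_cont (T : X ≃ₜ X) {f : X → G} (hf : Continuous f) [IsTopologicalGroup G]
    (m : ℕ) : Continuous fun x => cocycleNat T f m x := by
  induction m with
  | zero => simpa [cocycleNat] using continuous_const
  | succ m ih =>
      have : ∀ x, cocycleNat T f (m+1) x = f ((T.toEquiv ^ m) x) * cocycleNat T f m x :=
        fun _ => rfl
      simp only [this]
      exact (hf.comp (contPermPow _ T.continuous m)).mul ih

theorem cocycle_cont (T : X ≃ₜ X) {f : X → G} (hf : Continuous f) [IsTopologicalGroup G]
    (n : ℤ) : Continuous fun x => cocycle T f n x := by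
  rcases le_or_gt 0 n with hn | hn
  · simp only [cocycle, if_pos hn]
    exact cocycleNat_cont T hf n.toNat
  · simp only [cocycle, if_neg (not_le.mpr hn)]
    exact ((cocycleNat_cont T hf (-n).toNat).comp (contTz T n)).inv

end Aux

section Aux2

variable {X : Type*} [TopologicalSpace X] {G : Type*} [TopologicalSpace G] [Group G]
  [IsTopologicalGroup G]

theorem essRange_inv (T : X ≃ₜ X) (f : X → G) (x : X) {g : G}
    (hg : g ∈ essRange T f x) : g⁻¹ ∈ essRange T f x := by
  intro U hU hxU V hV h1V
  have hV'o : IsOpen ((fun w => g⁻¹ * w⁻¹ * g) ⁻¹' V) :=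
    hV.preimage (((continuous_const.mul continuous_inv)).mul continuous_const)
  have h1V' : (1:G) ∈ (fun w => g⁻¹ * w⁻¹ * g) ⁻¹' V := by
    simpa using h1V
  obtain ⟨n, y, hyU, hTy, v', hv', hc⟩ := hg U hU hxU _ hV'o h1V'
  refine ⟨-n, (T.toEquiv ^ n) y, hTy, ?_, g⁻¹ * v'⁻¹ * g, hv', ?_⟩
  · rw [Tz_add]
    simpa using hyU
  · rw [cocycle_neg T f n y, hc]
    group

theorem notMem_essRange_nbhd (T : X ≃ₜ X) (f : X → G) {x : X} {g : G}
    (hg : g ∉ essRange T f x) :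
    ∃ (U' : Set X) (V₁ : Set G), IsOpen U' ∧ x ∈ U' ∧ IsOpen V₁ ∧ g ∈ V₁ ∧
      ∀ y ∈ U', ∀ g' ∈ V₁, g' ∉ essRange T f y := by
  simp only [essRange, Set.mem_setOf_eq] at hg
  push_neg at hg
  obtain ⟨U, hUo, hxU, V, hVo, h1V, hno⟩ := hg
  obtain ⟨V₂, hV₂o, h1V₂, hV₂V⟩ := exists_open_nhds_one_mul_subset (hVo.mem_nhds h1V)
  refine ⟨U, (fun w => w * g⁻¹) ⁻¹' V₂, hUo, hxU,
    hV₂o.preimage (continuous_id.mul continuous_const), by simpa using h1V₂, ?_⟩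
  intro y hyU g' hg' hmem
  obtain ⟨n, z, hz, hTz, v, hv, hc⟩ := hmem U hUo hyU V₂ hV₂o h1V₂
  refine hno n z hz hTz (v * (g' * g⁻¹)) (hV₂V (Set.mul_mem_mul hv hg')) ?_
  rw [hc]; group

theorem essRange_isClosed (T : X ≃ₜ X) (f : X → G) (x : X) :
    IsClosed (essRange T f x) := by
  rw [← isOpen_compl_iff, isOpen_iff_mem_nhds]
  intro g hg
  obtain ⟨U', V₁, hU'o, hxU', hV₁o, hgV₁, hP⟩ := notMem_essRange_nbhd T f hg
  exact Filter.mem_of_superset (hV₁o.mem_nhds hgV₁) (fun g' hg' => hP x hxU' g' hg')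

theorem essRange_mul_inv (T : X ≃ₜ X) (hT : IsMinimal T) {f : X → G} (hf : Continuous f)
    {H : X → Subgroup G} (hH : IsConsistentSelection T f H) (y : X) {e h : G}
    (he : e ∈ essRange T f y) (hh : h ∈ H y) : e * h⁻¹ ∈ essRange T f y := by
  intro U hUopen hyU V hVopen h1V
  obtain ⟨B, hBo, h1B, hBV⟩ := exists_open_nhds_one_mul_subset (hVopen.mem_nhds h1V)
  obtain ⟨A, hAo, h1A, hAB⟩ := exists_open_nhds_one_mul_subset (hBo.mem_nhds h1B)
  have hAsub : A ⊆ B := fun a ha => by simpa using hAB (Set.mul_mem_mul ha h1A)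
  have hAAA : ∀ a b c : G, a ∈ A → b ∈ A → c ∈ A → a * b * c ∈ V := fun a b c ha hb hc =>
    hBV (Set.mul_mem_mul (hAB (Set.mul_mem_mul ha hb)) (hAsub hc))
  set C₁ : Set G := (fun w => e * w * e⁻¹) ⁻¹' A with hC₁
  set C₂ : Set G := (fun w => (e * h⁻¹) * w * (e * h⁻¹)⁻¹) ⁻¹' A with hC₂
  have hC₁o : IsOpen C₁ := hAo.preimage ((continuous_const.mul continuous_id).mul continuous_const)
  have hC₂o : IsOpen C₂ := hAo.preimage ((continuous_const.mul continuous_id).mul continuous_const)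
  have h1C₁ : (1:G) ∈ C₁ := by simp [hC₁, h1A]
  have h1C₂ : (1:G) ∈ C₂ := by
    show e * h⁻¹ * 1 * (e * h⁻¹)⁻¹ ∈ A
    have hid : e * h⁻¹ * 1 * (e * h⁻¹)⁻¹ = 1 := by group
    rw [hid]; exact h1A
  obtain ⟨D', hD'o, h1D', hD'C⟩ :=
    exists_open_nhds_one_mul_subset ((hC₁o.inter hC₂o).mem_nhds ⟨h1C₁, h1C₂⟩)
  set D : Set G := D' ∩ D'⁻¹ with hD
  have hDo : IsOpen D := hD'o.inter hD'o.inv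
  have h1D : (1:G) ∈ D := ⟨h1D', by simpa using h1D'⟩
  have hDsym : ∀ w ∈ D, w⁻¹ ∈ D := fun w hw => ⟨hw.2, by simpa using hw.1⟩
  have hDsub : D ⊆ D' := fun w hw => hw.1
  set V₆ : Set G := D ∩ A with hV₆
  have hV₆o : IsOpen V₆ := hDo.inter hAo
  have h1V₆ : (1:G) ∈ V₆ := ⟨h1D, h1A⟩
  set O : Set G := (fun w => w * h⁻¹) ⁻¹' D with hO
  have hOo : IsOpen O := hDo.preimage (continuous_id.mul continuous_const)
  have hOne : (O ∩ (H y : Set G)).Nonempty :=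
    ⟨h, ⟨by simpa [hO] using h1D, SetLike.mem_coe.mpr hh⟩⟩
  obtain ⟨Ws, hWsnhds, hWsP⟩ := hH.fell_open y O hOo hOne
  obtain ⟨Ws', hWs'sub, hWs'o, hyWs'⟩ := mem_nhds_iff.mp hWsnhds
  set U' : Set X := U ∩ Ws' with hU'
  have hU'o : IsOpen U' := hUopen.inter hWs'o
  have hyU' : y ∈ U' := ⟨hyU, hyWs'⟩
  obtain ⟨n₁, y₁, hy₁, hTy₁, v₆, hv₆, hc₆⟩ := he U' hU'o hyU' V₆ hV₆o h1V₆
  set U₁ : Set X := (U' ∩ ((fun w => (T.toEquiv ^ n₁) w) ⁻¹' U')) ∩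
      ((fun w => cocycle T f n₁ w * e⁻¹) ⁻¹' V₆) with hU₁
  have hU₁o : IsOpen U₁ :=
    ((hU'o.inter (hU'o.preimage (contTz T n₁))).inter
      (hV₆o.preimage ((cocycle_cont T hf n₁).mul continuous_const)))
  have hy₁U₁ : y₁ ∈ U₁ := by
    refine ⟨⟨hy₁, hTy₁⟩, ?_⟩
    show cocycle T f n₁ y₁ * e⁻¹ ∈ V₆
    rw [hc₆]
    simpa using hv₆
  obtain ⟨p, hpmem, hpU₁⟩ := (hT y).exists_mem_open hU₁o ⟨y₁, hy₁U₁⟩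
  obtain ⟨k, hk⟩ := hpmem
  simp only at hk
  set c : G := cocycle T f k y with hcdef
  have hy'U₁ : (T.toEquiv ^ k) y ∈ U₁ := by rw [hk]; exact hpU₁
  have hy'Ws : (T.toEquiv ^ k) y ∈ Ws := hWs'sub hy'U₁.1.1.2
  obtain ⟨ht, htO, htH⟩ := hWsP _ hy'Ws
  rw [hH.conj y k] at htH
  obtain ⟨h₀, hh₀H, hh₀eq⟩ := htH
  simp only at hh₀eq
  have hh₀E : h₀⁻¹ ∈ essRange T f y :=
    essRange_inv T f y (hH.subset_essRange y hh₀H)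
  set W : Set X := ((fun w => (T.toEquiv ^ k) w) ⁻¹' U₁) ∩
      ((fun w => cocycle T f k w * c⁻¹) ⁻¹' D) with hWdef
  have hWo : IsOpen W :=
    (hU₁o.preimage (contTz T k)).inter (hDo.preimage ((cocycle_cont T hf k).mul continuous_const))
  have hyW : y ∈ W := ⟨hy'U₁, by show c * c⁻¹ ∈ D; simpa using h1D⟩
  set V₂' : Set G := (fun w => c * w * c⁻¹) ⁻¹' V₆ with hV₂'
  have hV₂'o : IsOpen V₂' :=
    hV₆o.preimage ((continuous_const.mul continuous_id).mul continuous_const)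
  have h1V₂' : (1:G) ∈ V₂' := by
    show c * 1 * c⁻¹ ∈ V₆
    simpa using h1V₆
  obtain ⟨l, y₂, hy₂W, hTly₂W, v₂, hv₂, hcl⟩ := hh₀E W hWo hyW V₂' hV₂'o h1V₂'
  have hzU₁ : (T.toEquiv ^ k) y₂ ∈ U₁ := hy₂W.1
  have hTlz : (T.toEquiv ^ l) ((T.toEquiv ^ k) y₂) ∈ U₁ := by
    have h1 : (T.toEquiv ^ l) ((T.toEquiv ^ k) y₂) = (T.toEquiv ^ k) ((T.toEquiv ^ l) y₂) := by
      rw [Tz_add, Tz_add, add_comm]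
    rw [h1]
    exact hTly₂W.1
  refine ⟨n₁ + l, (T.toEquiv ^ k) y₂, hzU₁.1.1.1, ?_, ?_⟩
  · rw [← Tz_add T n₁ l ((T.toEquiv ^ k) y₂)]
    exact hTlz.1.2.1
  · have hsplit : cocycle T f (n₁ + l) ((T.toEquiv ^ k) y₂) =
        cocycle T f n₁ ((T.toEquiv ^ l) ((T.toEquiv ^ k) y₂)) *
          (cocycle T f k ((T.toEquiv ^ l) y₂) *
            (cocycle T f l y₂ * (cocycle T f k y₂)⁻¹)) := by
      rw [cocycle_add T f n₁ l]
      congr 1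
      have e1 := cocycle_add T f k l y₂
      have e2 := cocycle_add T f l k y₂
      rw [add_comm l k] at e2
      rw [e1] at e2
      have e4 : cocycle T f l ((T.toEquiv ^ k) y₂)
          = cocycle T f k ((T.toEquiv ^ l) y₂) * cocycle T f l y₂ * (cocycle T f k y₂)⁻¹ :=
        eq_mul_inv_of_mul_eq e2.symm
      rw [e4, mul_assoc]
    refine ⟨(cocycle T f n₁ ((T.toEquiv ^ l) ((T.toEquiv ^ k) y₂)) * e⁻¹) *
        (e * ((cocycle T f k ((T.toEquiv ^ l) y₂) * c⁻¹) * (c * v₂ * c⁻¹)) * e⁻¹) *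
        ((e * h⁻¹) * ((ht * h⁻¹)⁻¹ * (cocycle T f k y₂ * c⁻¹)⁻¹) * (e * h⁻¹)⁻¹), ?_, ?_⟩
    · apply hAAA
      · exact hTlz.2.2
      · have hw : (cocycle T f k ((T.toEquiv ^ l) y₂) * c⁻¹) * (c * v₂ * c⁻¹) ∈ D' * D' :=
          Set.mul_mem_mul (hDsub hTly₂W.2) (hDsub (Set.mem_preimage.mp hv₂).1)
        exact (hD'C hw).1
      · have hw : (ht * h⁻¹)⁻¹ * (cocycle T f k y₂ * c⁻¹)⁻¹ ∈ D' * D' :=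
          Set.mul_mem_mul (hDsub (hDsym _ htO)) (hDsub (hDsym _ hy₂W.2))
        exact (hD'C hw).2
    · rw [hsplit, hcl, ← hh₀eq, hcdef]
      group

end Aux2


theorem statement_1
    {X : Type*} [TopologicalSpace X] [CompactSpace X] [TopologicalSpace.MetrizableSpace X]
    {G : Type*} [TopologicalSpace G] [Group G] [IsTopologicalGroup G]
    [LocallyCompactSpace G] [SecondCountableTopology G] [T2Space G]
    (T : X ≃ₜ X) (hT : IsMinimal T) (f : X → G) (hf : Continuous f)
    (H : X → Subgroup G) (hH : IsConsistentSelection T f H)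
    (U : Set G) (hUopen : IsOpen U) (hUrc : IsCompact (closure U)) :
    IsOpen {x : X |
      essRange T f x ∩ ((closure U * (H x : Set G)) \ (U * (H x : Set G))) = ∅} := by
  rw [isOpen_iff_mem_nhds]
  intro x₀ hx₀
  simp only [Set.mem_setOf_eq] at hx₀
  rw [Set.eq_empty_iff_forall_notMem] at hx₀
  have hKcomp : IsCompact (essRange T f x₀ ∩ closure U) :=
    hUrc.inter_left (essRange_isClosed T f x₀)
  have hKsub : essRange T f x₀ ∩ closure U ⊆ U * (H x₀ : Set G) := by
    rintro g ⟨hgE, hgcl⟩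
    by_contra hgU
    exact hx₀ g ⟨hgE, ⟨Set.mem_mul.mpr ⟨g, hgcl, 1, SetLike.mem_coe.mpr (H x₀).one_mem,
      mul_one g⟩, hgU⟩⟩
  -- covering data for points of K
  have hOW : ∀ g : G, ∃ (O : Set G) (W : Set X), g ∈ essRange T f x₀ ∩ closure U →
      (IsOpen O ∧ g ∈ O ∧ W ∈ 𝓝 x₀ ∧ ∀ y ∈ W, O ⊆ U * (H y : Set G)) := by
    intro g
    by_cases hg : g ∈ essRange T f x₀ ∩ closure U
    · obtain ⟨u, hu, h', hh', huh⟩ := Set.mem_mul.mp (hKsub hg)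
      have hcont : Continuous fun q : G × G => q.1 * u * q.2 :=
        (continuous_fst.mul continuous_const).mul continuous_snd
      have hmem : (fun q : G × G => q.1 * u * q.2) ⁻¹' U ∈ 𝓝 ((1:G), (1:G)) :=
        (hUopen.preimage hcont).mem_nhds (by simpa using hu)
      rw [mem_nhds_prod_iff] at hmem
      obtain ⟨N₁, hN₁, N₂, hN₂, hN₁₂⟩ := hmem
      obtain ⟨N₁', hN₁'sub, hN₁'o, h1N₁'⟩ := mem_nhds_iff.mp hN₁
      obtain ⟨N₂', hN₂'sub, hN₂'o, h1N₂'⟩ := mem_nhds_iff.mp hN₂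
      set N : Set G := N₁' ∩ N₂'⁻¹ with hNdef
      have hNo : IsOpen N := hN₁'o.inter hN₂'o.inv
      have h1N : (1:G) ∈ N := ⟨h1N₁', by simpa using h1N₂'⟩
      have hNprop : ∀ m ∈ N, ∀ n ∈ N, m * u * n⁻¹ ∈ U := by
        intro m hm n hn
        exact hN₁₂ (Set.mk_mem_prod (hN₁'sub hm.1) (hN₂'sub hn.2))
      have hOho : IsOpen ((fun w => w * h'⁻¹) ⁻¹' N) :=
        hNo.preimage (continuous_id.mul continuous_const)
      obtain ⟨W, hWn, hWP⟩ := hH.fell_open x₀ _ hOho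
        ⟨h', by simpa using h1N, hh'⟩
      refine ⟨(fun w => w * g⁻¹) ⁻¹' N, W, fun _ =>
        ⟨hNo.preimage (continuous_id.mul continuous_const), by simpa using h1N, hWn, ?_⟩⟩
      intro y hy g' hg'
      obtain ⟨h'', hh''O, hh''H⟩ := hWP y hy
      refine Set.mem_mul.mpr ⟨(g' * g⁻¹) * u * (h'' * h'⁻¹)⁻¹,
        hNprop _ hg' _ hh''O, h'', hh''H, ?_⟩
      rw [← huh]; group
    · exact ⟨∅, Set.univ, fun hg' => absurd hg' hg⟩
  choose O W hOWP using hOW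
  obtain ⟨t, htK, htcov⟩ := hKcomp.elim_nhds_subcover O
    (fun g hg => ((hOWP g hg).1).mem_nhds ((hOWP g hg).2.1))
  have hOso : IsOpen (⋃ g ∈ t, O g) :=
    isOpen_biUnion fun g hg => (hOWP g (htK g hg)).1
  have hW' : (⋂ g ∈ t, W g) ∈ 𝓝 x₀ :=
    (Filter.biInter_finset_mem t).mpr fun g hg => (hOWP g (htK g hg)).2.2.1
  -- the compact leftover set
  have hK'comp : IsCompact (closure U \ ⋃ g ∈ t, O g) := hUrc.diff hOso
  have hK'E : ∀ g ∈ closure U \ ⋃ g ∈ t, O g, g ∉ essRange T f x₀ :=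
    fun g hg hE => hg.2 (htcov ⟨hE, hg.1⟩)
  have hAB : ∀ g : G, ∃ (Bp : Set G) (Ap : Set X), g ∈ closure U \ ⋃ g ∈ t, O g →
      (IsOpen Bp ∧ g ∈ Bp ∧ Ap ∈ 𝓝 x₀ ∧ ∀ y ∈ Ap, ∀ g' ∈ Bp, g' ∉ essRange T f y) := by
    intro g
    by_cases hg : g ∈ closure U \ ⋃ g ∈ t, O g
    · obtain ⟨U', V₁, hU'o, hx₀U', hV₁o, hgV₁, hP⟩ := notMem_essRange_nbhd T f (hK'E g hg)
      exact ⟨V₁, U', fun _ => ⟨hV₁o, hgV₁, hU'o.mem_nhds hx₀U', hP⟩⟩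
    · exact ⟨∅, Set.univ, fun hg' => absurd hg' hg⟩
  choose Bp Ap hABP using hAB
  obtain ⟨t₂, ht₂K, ht₂cov⟩ := hK'comp.elim_nhds_subcover Bp
    (fun g hg => (hABP g hg).1.mem_nhds (hABP g hg).2.1)
  have hW'' : (⋂ g ∈ t₂, Ap g) ∈ 𝓝 x₀ :=
    (Filter.biInter_finset_mem t₂).mpr fun g hg => (hABP g (ht₂K g hg)).2.2.1
  apply Filter.mem_of_superset (Filter.inter_mem hW' hW'')
  rintro y ⟨hyW', hyW''⟩
  simp only [Set.mem_setOf_eq]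
  rw [Set.eq_empty_iff_forall_notMem]
  rintro g ⟨hgE, hgmul, hgnot⟩
  obtain ⟨u, hucl, h', hh'H, huh⟩ := Set.mem_mul.mp hgmul
  have huE : u ∈ essRange T f y := by
    have hmi := essRange_mul_inv T hT hf hH y hgE (SetLike.mem_coe.mp hh'H)
    have hueq : u = g * h'⁻¹ := by rw [← huh]; group
    rw [hueq]; exact hmi
  have hunot : u ∉ U * (H y : Set G) := by
    intro hum
    obtain ⟨u', hu', h'', hh''2, hu'h⟩ := Set.mem_mul.mp hum
    apply hgnot
    refine Set.mem_mul.mpr ⟨u', hu', h'' * h',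
      SetLike.mem_coe.mpr ((H y).mul_mem (SetLike.mem_coe.mp hh''2) (SetLike.mem_coe.mp hh'H)),
      ?_⟩
    rw [← huh, ← hu'h]; group
  by_cases huO : u ∈ ⋃ g ∈ t, O g
  · obtain ⟨g₀, hg₀t, hug₀⟩ := Set.mem_iUnion₂.mp huO
    exact hunot ((hOWP g₀ (htK g₀ hg₀t)).2.2.2 y (Set.mem_iInter₂.mp hyW' g₀ hg₀t) hug₀)
  · obtain ⟨g₀, hg₀t₂, hug₀⟩ := Set.mem_iUnion₂.mp (ht₂cov ⟨hucl, huO⟩)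
    exact (hABP g₀ (ht₂K g₀ hg₀t₂)).2.2.2 y (Set.mem_iInter₂.mp hyW'' g₀ hg₀t₂) u hug₀ huE
end

section
/- The cocycle f is recurrent if and only if the skew product T_f is topologically conservative (regionally recurrent), i.e. for every nonempty open set 𝒪 ⊆ X × G there is an integer n ≠ 0 with T_f^n(𝒪) ∩ 𝒪 ≠ ∅. -/
open Topology Pointwise Set Filter

theorem statement_11
    {X : Type*} [TopologicalSpace X] [CompactSpace X] [TopologicalSpace.MetrizableSpace X]
    {G : Type*} [TopologicalSpace G] [Group G] [IsTopologicalGroup G]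
    [LocallyCompactSpace G] [SecondCountableTopology G] [T2Space G]
    (T : X ≃ₜ X) (hT : IsMinimal T) (f : X → G) (hf : Continuous f)
 :
    IsRecurrentCocycle T f ↔
      ∀ O : Set (X × G), IsOpen O → O.Nonempty →
        ∃ n : ℤ, n ≠ 0 ∧ ((skewPow T f n '' O) ∩ O).Nonempty := by
  constructor
  · -- recurrent cocycle → conservative skew product
    intro hrec O hO ⟨⟨x₀, g₀⟩, hp⟩
    obtain ⟨U, V', hU, hV', hxU, hgV, hUV⟩ := isOpen_prod_iff.1 hO x₀ g₀ hp
    have hV : IsOpen ((fun g : G => g * g₀) ⁻¹' V') :=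
      hV'.preimage (continuous_mul_right g₀)
    obtain ⟨n, hn, y, hyU, hTyU, hfy⟩ := hrec _ hV (by simpa using hgV) U hU ⟨x₀, hxU⟩
    refine ⟨n, hn, ⟨((T.toEquiv ^ n) y, cocycle T f n y * g₀), ⟨⟨(y, g₀), hUV ⟨hyU, hgV⟩, rfl⟩,
      hUV ⟨hTyU, hfy⟩⟩⟩⟩
  · -- conservative skew product → recurrent cocycle
    intro hcons V hV h1V U hU hUne
    obtain ⟨W₀, hW₀, h1W₀, hW₀W₀⟩ := exists_open_nhds_one_mul_subset (hV.mem_nhds h1V)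
    set W : Set G := W₀ ∩ W₀⁻¹ with hW
    have hWopen : IsOpen W := hW₀.inter (hW₀.preimage continuous_inv)
    have h1W : (1 : G) ∈ W := ⟨h1W₀, by simpa using h1W₀⟩
    obtain ⟨x₀, hx₀⟩ := hUne
    obtain ⟨n, hn, q, ⟨p, hpO, hpq⟩, hqO⟩ :=
      hcons (U ×ˢ W) (hU.prod hWopen) ⟨(x₀, 1), hx₀, h1W⟩
    obtain ⟨x, g⟩ := p
    obtain ⟨hxU, hgW⟩ := hpO
    subst hpq
    obtain ⟨hTxU, hfgW⟩ := hqO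
    refine ⟨n, hn, x, hxU, hTxU, ?_⟩
    have : cocycle T f n x = (cocycle T f n x * g) * g⁻¹ := by group
    rw [this]
    exact hW₀W₀ (Set.mul_mem_mul hfgW.1 hgW.2)
end

section
/- The map x ↦ E_x(f) is semi-continuous in the following sense: if x_k → x in X, g_k ∈ E_{x_k}(f) for every k, and g_k → g in G, then g ∈ E_x(f). -/
open Topology Pointwise Set Filter

theorem statement_12
    {X : Type*} [TopologicalSpace X] [CompactSpace X] [TopologicalSpace.MetrizableSpace X]
    {G : Type*} [TopologicalSpace G] [Group G] [IsTopologicalGroup G]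
    [LocallyCompactSpace G] [SecondCountableTopology G] [T2Space G]
    (T : X ≃ₜ X) (hT : IsMinimal T) (f : X → G) (hf : Continuous f)
    (x : ℕ → X) (g : ℕ → G) (x₀ : X) (g₀ : G)
    (hx : Filter.Tendsto x Filter.atTop (𝓝 x₀))
    (hg : ∀ k : ℕ, g k ∈ essRange T f (x k))
    (hgg : Filter.Tendsto g Filter.atTop (𝓝 g₀)) :
    g₀ ∈ essRange T f x₀ := by
  intro U hU hxU V hV hV1
  obtain ⟨V₁, hV₁o, hV₁1, hV₁mul⟩ :=
    exists_open_nhds_one_mul_subset (hV.mem_nhds hV1)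
  -- eventually x k ∈ U and g k * g₀⁻¹ ∈ V₁
  have h1 : ∀ᶠ k in Filter.atTop, x k ∈ U := hx (hU.mem_nhds hxU)
  have h2 : ∀ᶠ k in Filter.atTop, g k * g₀⁻¹ ∈ V₁ := by
    have : Filter.Tendsto (fun k => g k * g₀⁻¹) Filter.atTop (𝓝 (g₀ * g₀⁻¹)) :=
      hgg.mul_const _
    rw [mul_inv_cancel] at this
    exact this (hV₁o.mem_nhds hV₁1)
  obtain ⟨k, hkU, hkV⟩ := (h1.and h2).exists
  obtain ⟨n, y, hyU, hTyU, v, hvV₁, hcoc⟩ := hg k U hU hkU V₁ hV₁o hV₁1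
  refine ⟨n, y, hyU, hTyU, v * (g k * g₀⁻¹), hV₁mul (Set.mul_mem_mul hvV₁ hkV), ?_⟩
  rw [hcoc]
  group
end

section
/- Let b : X → G be continuous and define the cohomologous cocycle generated by f̃(x) = b(Tx)·f(x)·b(x)^{-1}, so that f̃(n,x) = b(T^n x)·f(n,x)·b(x)^{-1} for all n ∈ ℤ and x ∈ X. If f̃ is strongly regular, then f is strongly regular. -/
open Topology Pointwise Set Filter

section Aux

variable {X : Type*} [TopologicalSpace X] {G : Type*} [TopologicalSpace G] [Group G]

lemma cocycleNat_conj (T : X ≃ₜ X) (f b : X → G) (n : ℕ) (x : X) :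
    cocycleNat T (fun x => b (T x) * f x * (b x)⁻¹) n x
      = b ((T.toEquiv ^ n) x) * cocycleNat T f n x * (b x)⁻¹ := by
  induction n with
  | zero => simp [cocycleNat]
  | succ n ih =>
    have h : T ((T.toEquiv ^ n) x) = (T.toEquiv ^ (n + 1)) x := by
      simp [pow_succ']
    simp only [cocycleNat, ih, ← h]
    group

lemma cocycle_conj (T : X ≃ₜ X) (f b : X → G) (n : ℤ) (x : X) :
    cocycle T (fun x => b (T x) * f x * (b x)⁻¹) n x
      = b ((T.toEquiv ^ n) x) * cocycle T f n x * (b x)⁻¹ := by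
  unfold cocycle
  by_cases hn : 0 ≤ n
  · have hpow : (T.toEquiv ^ n) = T.toEquiv ^ n.toNat := by
      rw [← zpow_natCast, Int.toNat_of_nonneg hn]
    simp only [hn, if_true]
    rw [cocycleNat_conj, hpow]
  · have key : (T.toEquiv ^ ((-n).toNat : ℕ)) ((T.toEquiv ^ n) x) = x := by
      have : ((-n).toNat : ℤ) = -n := Int.toNat_of_nonneg (by omega)
      have : (T.toEquiv ^ ((-n).toNat : ℕ)) = T.toEquiv ^ (-n : ℤ) := by
        rw [← zpow_natCast, this]
      rw [this]
      have := zpow_neg (T.toEquiv) n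
      rw [this]
      exact (T.toEquiv ^ n).symm_apply_apply x
    simp only [hn, if_false, cocycleNat_conj, key]
    group

/-- The fibered translation `(x, g) ↦ (x, b(x)⁻¹ g)` as a homeomorphism. -/
def phiHomeo [IsTopologicalGroup G] (b : X → G) (hb : Continuous b) :
    X × G ≃ₜ X × G where
  toFun p := (p.1, (b p.1)⁻¹ * p.2)
  invFun p := (p.1, b p.1 * p.2)
  left_inv p := by simp
  right_inv p := by simp
  continuous_toFun := by fun_prop
  continuous_invFun := by fun_prop

lemma phi_skewPow [IsTopologicalGroup G] (T : X ≃ₜ X) (f b : X → G) (hb : Continuous b)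
    (n : ℤ) (p : X × G) :
    phiHomeo b hb (skewPow T (fun x => b (T x) * f x * (b x)⁻¹) n p)
      = skewPow T f n (phiHomeo b hb p) := by
  simp only [phiHomeo, skewPow, Homeomorph.homeomorph_mk_coe, Equiv.coe_fn_mk,
    cocycle_conj]
  ext <;> simp <;> group

end Aux


theorem statement_18
    {X : Type*} [TopologicalSpace X] [CompactSpace X] [TopologicalSpace.MetrizableSpace X]
    {G : Type*} [TopologicalSpace G] [Group G] [IsTopologicalGroup G]
    [LocallyCompactSpace G] [SecondCountableTopology G] [T2Space G]
    (T : X ≃ₜ X) (hT : IsMinimal T) (f : X → G) (hf : Continuous f)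
    (b : X → G) (hb : Continuous b)
    (hreg : IsStronglyRegularCocycle T (fun x : X => b (T x) * f x * (b x)⁻¹)) :
    IsStronglyRegularCocycle T f := by
  obtain ⟨C, ⟨p, hC⟩, hsurj, hcos⟩ := hreg
  set Φ := phiHomeo b hb with hΦ
  refine ⟨Φ '' C, ⟨Φ p, ?_⟩, ?_, ?_⟩
  · -- orbit closure
    rw [hC, orbitClosure, orbitClosure, Φ.image_closure]
    rw [← Set.range_comp]
    exact congrArg closure (congrArg Set.range (funext fun n => phi_skewPow T f b hb n p))
  · -- surjectivity
    have : Prod.fst '' (Φ '' C) = Prod.fst '' C := by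
      rw [← Set.image_comp]
      rfl
    rw [this, hsurj]
  · -- sections
    have hstab : stabSet (Φ '' C) = stabSet C := by
      ext g
      simp only [stabSet, Set.mem_setOf_eq]
      have hcomm : (fun q : X × G => (q.1, q.2 * g⁻¹)) ∘ Φ
          = Φ ∘ (fun q : X × G => (q.1, q.2 * g⁻¹)) := by
        funext q
        simp [hΦ, phiHomeo, mul_assoc]
      have key : (fun q : X × G => (q.1, q.2 * g⁻¹)) '' (⇑Φ '' C)
          = ⇑Φ '' ((fun q : X × G => (q.1, q.2 * g⁻¹)) '' C) := by
        rw [← Set.image_comp, hcomm, Set.image_comp]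
      rw [key]
      constructor
      · intro h
        exact (Set.image_injective.mpr Φ.injective) h
      · intro h
        rw [h]
    intro x
    obtain ⟨gx, hgx⟩ := hcos x
    refine ⟨(b x)⁻¹ * gx, ?_⟩
    have hsec : {g : G | (x, g) ∈ Φ '' C} = (fun g => (b x)⁻¹ * g) '' {g : G | (x, g) ∈ C} := by
      ext g
      simp only [Set.mem_setOf_eq, Set.mem_image]
      constructor
      · rintro ⟨⟨y, c⟩, hyc, heq⟩
        simp only [hΦ, phiHomeo, Homeomorph.homeomorph_mk_coe, Equiv.coe_fn_mk,
          Prod.mk.injEq] at heq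
        obtain ⟨rfl, rfl⟩ := heq
        exact ⟨c, hyc, rfl⟩
      · rintro ⟨c, hc, rfl⟩
        exact ⟨(x, c), hc, rfl⟩
    rw [hstab, hsec, hgx]
    rw [Set.singleton_mul, Set.singleton_mul, ← Set.image_comp]
    simp only [Function.comp, mul_assoc]
end
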